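/- Let d ≥ 2 and κ ≥ 1 be coprime integers, let i, j ≥ 0 be integers, and write κ(j−i) = ad + b − d/2, where a is an integer and b is a half-integer with 0 ≤ b < d (b is an integer when d is even). Then: if 2κ(i−j) > −d, then π_{κ/d}(q^{i+d} + q^j) − π_{κ/d}(q^i + q^j) = 2κ; if d − 2κd ≤ 2κ(i−j) ≤ −d, then this difference equals 2(κ − a) + 1 when b = 0 and 2(κ − a) when b ≠ 0; and if 2κ(i−j) < d − 2κd, then this difference equals 0. -/

import Mathlib

open Polynomial

/-- `argCount t f` is the cardinality of the multiset `Arg_t(f)` of real numbers `λ` with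
`0 < λ ≤ 2πt` such that `e^{iλ}` is a (complex) root of the real polynomial `f`, each such `λ`
counted with the multiplicity of `e^{iλ}` as a root of `f`. -/
noncomputable def argCount (t : ℝ) (f : Polynomial ℝ) : ℕ :=
  ((f.map (algebraMap ℝ ℂ)).roots.map fun ξ =>
    Nat.card {l : ℝ // 0 < l ∧ l ≤ 2 * Real.pi * t ∧ Complex.exp ((l : ℂ) * Complex.I) = ξ}).sum

/-- `piFn κ d f` is the rational number
`π_{κ/d}(f) = (a(f) + A(f))·(κ/d) + |Arg_{κ/d}(f)| + (1/2)·(multiplicity of 1 as a root of f)`,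
where `a(f)` is the multiplicity of `0` as a root of `f` and `A(f)` is the degree of `f`. -/
noncomputable def piFn (κ d : ℕ) (f : Polynomial ℝ) : ℚ :=
  ((rootMultiplicity 0 f : ℚ) + (f.natDegree : ℚ)) * (κ : ℚ) / (d : ℚ)
    + (argCount ((κ : ℝ) / (d : ℝ)) f : ℚ) + (rootMultiplicity 1 f : ℚ) / 2

open Complex

noncomputable def rootFn (k : ℕ) : ℕ → ℂ :=
  fun r => Complex.exp ((2 * r + 1) * (Real.pi : ℂ) / k * Complex.I)

lemma roots_X_pow_add_one (k : ℕ) (hk : k ≠ 0) :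
    (X ^ k + 1 : ℂ[X]).roots = (Multiset.range k).map (rootFn k) := by
  have hpos : 0 < k := Nat.pos_of_ne_zero hk
  have hX : (X ^ k + 1 : ℂ[X]) = X ^ k - C (-1) := by simp [sub_neg_eq_add]
  have hroots : (X ^ k + 1 : ℂ[X]).roots = nthRoots k (-1) := by rw [hX]; rfl
  have hkc : (k : ℂ) ≠ 0 := Nat.cast_ne_zero.mpr hk
  have hπI : (Real.pi : ℂ) * I ≠ 0 := mul_ne_zero (by exact_mod_cast Real.pi_ne_zero) I_ne_zero
  have hginj : ∀ r, r < k → ∀ r', r' < k → rootFn k r = rootFn k r' → r = r' := by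
    intro r hr r' hr' h
    simp only [rootFn] at h
    rw [Complex.exp_eq_exp_iff_exists_int] at h
    obtain ⟨n, hn⟩ := h
    have h2 : ((2 * r + 1 : ℂ)) * ((Real.pi : ℂ) * I) =
        ((2 * r' + 1 : ℂ) + 2 * n * k) * ((Real.pi : ℂ) * I) := by
      field_simp at hn
      linear_combination (↑Real.pi * I) * hn
    have h3 := mul_right_cancel₀ hπI h2
    have h4 : (2 * (r:ℤ) + 1) = 2 * r' + 1 + 2 * n * k := by exact_mod_cast h3
    have hrk : (r : ℤ) < k := by exact_mod_cast hr
    have hrk' : (r' : ℤ) < k := by exact_mod_cast hr'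
    have hr0 : (0:ℤ) ≤ (r:ℤ) := Int.ofNat_nonneg r
    have hr0' : (0:ℤ) ≤ (r':ℤ) := Int.ofNat_nonneg r'
    have hn0 : n = 0 := by
      rcases lt_trichotomy n 0 with h | h | h
      · nlinarith
      · exact h
      · nlinarith
    rw [hn0] at h4
    omega
  have hmem : ∀ r, rootFn k r ^ k = -1 := by
    intro r
    simp only [rootFn]
    rw [← Complex.exp_nat_mul]
    have h1 : (k : ℂ) * ((2 * r + 1) * (Real.pi : ℂ) / k * I) = ((2*r+1 : ℕ) : ℂ) * ((Real.pi:ℂ) * I) := by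
      push_cast; field_simp
    rw [h1]
    have h2 : ((((2*r+1 : ℕ)) : ℂ) * ((Real.pi:ℂ) * I)) = ((2*r+1 : ℕ) : ℂ) * ((Real.pi:ℂ) * I) := rfl
    rw [show (((2*r+1 : ℕ)) : ℂ) * ((Real.pi:ℂ) * I) = ((2*r+1 : ℕ) : ℂ) * ((Real.pi:ℂ)*I) from rfl]
    rw [Complex.exp_nat_mul, Complex.exp_pi_mul_I]
    exact Odd.neg_one_pow ⟨r, by ring⟩
  set S := (Multiset.range k).map (rootFn k) with hS
  have hnodup : S.Nodup := Multiset.Nodup.map_on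
    (fun x hx y hy => hginj x (Multiset.mem_range.mp hx) y (Multiset.mem_range.mp hy))
    (Multiset.nodup_range k)
  have hle : S ≤ (X ^ k + 1 : ℂ[X]).roots := by
    rw [Multiset.le_iff_count]
    intro z
    by_cases hz : z ∈ S
    · have h1 : S.count z ≤ 1 := (Multiset.nodup_iff_count_le_one.mp hnodup) z
      have h2 : 1 ≤ ((X ^ k + 1 : ℂ[X]).roots).count z := by
        rw [Multiset.one_le_count_iff_mem, hroots, Polynomial.mem_nthRoots hpos]
        obtain ⟨r, hr, hrz⟩ := Multiset.mem_map.mp hz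
        rw [← hrz]
        exact hmem r
      omega
    · rw [Multiset.count_eq_zero_of_notMem hz]; omega
  refine (Multiset.eq_of_le_of_card_le hle ?_).symm
  rw [hS, Multiset.card_map, Multiset.card_range, hroots]
  exact Polynomial.card_nthRoots k (-1)

lemma natCard_arg (T c : ℝ) (hc0 : 0 < c) (hc2 : c ≤ 2*Real.pi) :
    Nat.card {l : ℝ // 0 < l ∧ l ≤ T ∧ Complex.exp ((l:ℂ) * Complex.I) = Complex.exp ((c:ℂ) * Complex.I)}
      = Set.ncard {s : ℕ | c + 2*Real.pi*(s:ℝ) ≤ T} := by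
  have hπ := Real.pi_pos
  have hset : {l : ℝ | 0 < l ∧ l ≤ T ∧ Complex.exp ((l:ℂ) * Complex.I) = Complex.exp ((c:ℂ) * Complex.I)}
      = (fun s : ℕ => c + 2*Real.pi*(s:ℝ)) '' {s : ℕ | c + 2*Real.pi*(s:ℝ) ≤ T} := by
    ext l
    constructor
    · rintro ⟨h1, h2, h3⟩
      rw [Complex.exp_eq_exp_iff_exists_int] at h3
      obtain ⟨m, hm⟩ := h3
      have hl : l = c + 2*Real.pi*(m:ℝ) := by
        have h4 : ((l:ℝ) : ℂ) * I = ((c + 2*Real.pi*(m:ℝ) : ℝ) : ℂ) * I := by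
          rw [hm]; push_cast; ring
        exact Complex.ofReal_injective (mul_right_cancel₀ I_ne_zero h4)
      have hm0 : 0 ≤ m := by
        by_contra hneg
        push_neg at hneg
        have hm1 : m ≤ -1 := by omega
        have : (m : ℝ) ≤ -1 := by exact_mod_cast hm1
        nlinarith
      have hcast : ((m.toNat : ℕ) : ℝ) = (m : ℝ) := by
        exact_mod_cast Int.toNat_of_nonneg hm0
      refine ⟨m.toNat, ?_, ?_⟩
      · show c + 2*Real.pi*((m.toNat : ℕ):ℝ) ≤ T
        rw [hcast, ← hl]; exact h2
      · show c + 2*Real.pi*((m.toNat : ℕ):ℝ) = l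
        rw [hcast, ← hl]
    · rintro ⟨s, hs, rfl⟩
      refine ⟨by positivity, hs, ?_⟩
      have heq : ((c + 2*Real.pi*(s:ℝ) : ℝ) : ℂ) * I = (c:ℂ) * I + (s:ℤ) * (2*Real.pi*I) := by
        push_cast; ring
      rw [heq, Complex.exp_add, Complex.exp_int_mul_two_pi_mul_I, mul_one]
  have hinj : Function.Injective (fun s : ℕ => c + 2*Real.pi*(s:ℝ)) := by
    intro x y hxy
    simp only at hxy
    have : (x:ℝ) = y := by nlinarith
    exact_mod_cast this
  have h1 : Nat.card {l : ℝ // 0 < l ∧ l ≤ T ∧ Complex.exp ((l:ℂ) * Complex.I) = Complex.exp ((c:ℂ) * Complex.I)}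
      = Set.ncard {l : ℝ | 0 < l ∧ l ≤ T ∧ Complex.exp ((l:ℂ) * Complex.I) = Complex.exp ((c:ℂ) * Complex.I)} :=
    Nat.card_coe_set_eq _
  rw [h1, hset]
  exact Set.ncard_image_of_injective _ hinj

lemma card_odd_range (n : ℕ) : ((Finset.range n).filter (fun m => Odd m)).card = n / 2 := by
  induction n with
  | zero => simp
  | succ n ih =>
    rw [Finset.range_add_one, Finset.filter_insert]
    by_cases h : Odd n
    · rw [if_pos h, Finset.card_insert_of_notMem (by simp), ih]
      have := Nat.odd_iff.mp h
      omega
    · rw [if_neg h, ih]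
      have := Nat.not_odd_iff.mp h
      omega

lemma sum_count (κ d k : ℕ) (hd : 1 ≤ d) (hk : 1 ≤ k) :
    ∑ r ∈ Finset.range k, ((Finset.range (κ+1)).filter (fun s => (2*r+1+2*k*s)*d ≤ 2*κ*k)).card
      = (2*κ*k/d + 1)/2 := by
  rw [← Finset.card_sigma, ← card_odd_range (2*κ*k/d + 1)]
  apply Finset.card_bij (fun p _ => 2*p.1+1+2*k*p.2)
  · rintro ⟨r, s⟩ hp
    rw [Finset.mem_sigma] at hp
    obtain ⟨hr, hs⟩ := hp
    rw [Finset.mem_filter] at hs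
    rw [Finset.mem_filter, Finset.mem_range]
    refine ⟨?_, ⟨r + k*s, by ring⟩⟩
    have hle : (2*r+1+2*k*s) ≤ 2*κ*k/d := (Nat.le_div_iff_mul_le hd).mpr hs.2
    show 2*r+1+2*k*s < 2*κ*k/d + 1
    omega
  · rintro ⟨r, s⟩ ha ⟨r', s'⟩ hb h
    rw [Finset.mem_sigma, Finset.mem_range] at ha hb
    simp only at h
    have e1 : 2*k*s = 2*(k*s) := by ring
    have e2 : 2*k*s' = 2*(k*s') := by ring
    have h1 : (r + k*s) = (r' + k*s') := by omega
    have h2 : (r + k*s) % k = r := by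
      rw [Nat.add_mul_mod_self_left, Nat.mod_eq_of_lt ha.1]
    have h3 : (r' + k*s') % k = r' := by
      rw [Nat.add_mul_mod_self_left, Nat.mod_eq_of_lt hb.1]
    have hr : r = r' := by rw [← h2, ← h3, h1]
    have hs : s = s' := by
      have : k * s = k * s' := by omega
      exact Nat.eq_of_mul_eq_mul_left hk this
    simp [hr, hs]
  · intro m hm
    rw [Finset.mem_filter, Finset.mem_range] at hm
    obtain ⟨hm1, p, hp⟩ := hm
    have hmd : m * d ≤ 2*κ*k := by
      have : m ≤ 2*κ*k/d := by omega
      exact (Nat.le_div_iff_mul_le hd).mp this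
    have hdm : k * (p / k) + p % k = p := Nat.div_add_mod p k
    have e3 : 2*k*(p/k) = 2*(k*(p/k)) := by ring
    have hsκ : p / k ≤ κ := by
      by_contra hc
      push_neg at hc
      have h5 : 2*κ*k + 2*k ≤ 2*(k*(p/k)) := by
        have : κ + 1 ≤ p / k := hc
        calc 2*κ*k + 2*k = 2*k*(κ+1) := by ring
        _ ≤ 2*k*(p/k) := Nat.mul_le_mul_left _ this
        _ = 2*(k*(p/k)) := by ring
      have h6 : 2*(k*(p/k)) ≤ 2*p := by omega
      have h7 : m ≤ m * d := Nat.le_mul_of_pos_right m hd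
      omega
    refine ⟨⟨p % k, p / k⟩, ?_, ?_⟩
    · rw [Finset.mem_sigma, Finset.mem_range, Finset.mem_filter, Finset.mem_range]
      refine ⟨Nat.mod_lt p hk, Nat.lt_succ_of_le hsκ, ?_⟩
      have : 2*(p % k)+1+2*k*(p/k) = m := by omega
      rw [this]; exact hmd
    · simp only
      omega



lemma argCount_zero_root (T : ℝ) :
    Nat.card {l : ℝ // 0 < l ∧ l ≤ 2 * Real.pi * T ∧ Complex.exp ((l : ℂ) * Complex.I) = 0} = 0 := by
  have : IsEmpty {l : ℝ // 0 < l ∧ l ≤ 2 * Real.pi * T ∧ Complex.exp ((l : ℂ) * Complex.I) = 0} := by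
    constructor
    rintro ⟨l, _, _, h⟩
    exact Complex.exp_ne_zero _ h
  exact Nat.card_of_isEmpty

lemma argCount_eq (κ d n k : ℕ) (hd : 1 ≤ d) (hκ : 1 ≤ κ) :
    argCount ((κ:ℝ)/(d:ℝ)) (X ^ (n + k) + X ^ n : ℝ[X]) = (2*κ*k/d + 1)/2 := by
  have hπ := Real.pi_pos
  have hmap : (X ^ (n + k) + X ^ n : ℝ[X]).map (algebraMap ℝ ℂ) = X ^ (n + k) + X ^ n := by
    simp [Polynomial.map_add, Polynomial.map_pow, Polynomial.map_X]
  rcases Nat.eq_zero_or_pos k with hk | hk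
  · subst hk
    rw [argCount, hmap]
    have h1 : (X ^ (n + 0) + X ^ n : ℂ[X]) = C 2 * X ^ n := by
      rw [Nat.add_zero, show (C 2 : ℂ[X]) = 2 from map_ofNat C 2]; ring
    rw [h1, Polynomial.roots_C_mul _ (two_ne_zero), Polynomial.roots_pow, Polynomial.roots_X]
    simp only [Multiset.map_nsmul, Multiset.map_singleton]
    rw [argCount_zero_root]
    simp [Multiset.nsmul_singleton, Multiset.sum_replicate]
  · rw [argCount, hmap]
    have h1 : (X ^ (n + k) + X ^ n : ℂ[X]) = X ^ n * (X ^ k + 1) := by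
      rw [pow_add]; ring
    have hX1 : (X ^ k + 1 : ℂ[X]) ≠ 0 := by
      have := Polynomial.X_pow_add_C_ne_zero (R := ℂ) hk (1 : ℂ)
      simpa using this
    have hXn : (X ^ n : ℂ[X]) ≠ 0 := pow_ne_zero _ Polynomial.X_ne_zero
    rw [h1, Polynomial.roots_mul (mul_ne_zero hXn hX1), Polynomial.roots_pow,
      Polynomial.roots_X, roots_X_pow_add_one k (by omega : k ≠ 0)]
    rw [Multiset.map_add]
    simp only [Multiset.map_nsmul, Multiset.map_singleton]
    rw [Multiset.sum_add, argCount_zero_root]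
    simp only [Multiset.sum_nsmul, Multiset.sum_singleton, smul_zero, zero_add]
    rw [Multiset.map_map]
    have hroot : ∀ r, r < k →
        Nat.card {l : ℝ // 0 < l ∧ l ≤ 2 * Real.pi * ((κ:ℝ)/(d:ℝ)) ∧ Complex.exp ((l : ℂ) * Complex.I) = rootFn k r}
        = ((Finset.range (κ+1)).filter (fun s => (2*r+1+2*k*s)*d ≤ 2*κ*k)).card := by
      intro r hr
      set c : ℝ := (2*r+1) * Real.pi / k with hc
      have hkR : (0:ℝ) < k := by exact_mod_cast hk
      have hdR : (0:ℝ) < d := by exact_mod_cast hd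
      have hc0 : 0 < c := by rw [hc]; positivity
      have hc2 : c ≤ 2 * Real.pi := by
        rw [hc, div_le_iff₀ hkR]
        have : (2*(r:ℝ)+1) ≤ 2*k := by
          have : (r:ℝ) + 1 ≤ k := by exact_mod_cast hr
          linarith
        nlinarith
      have hrfn : rootFn k r = Complex.exp ((c:ℂ) * Complex.I) := by
        rw [rootFn, hc]
        push_cast
        ring_nf
      rw [hrfn, natCard_arg _ c hc0 hc2]
      have hseteq : {s : ℕ | c + 2*Real.pi*(s:ℝ) ≤ 2 * Real.pi * ((κ:ℝ)/(d:ℝ))}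
          = ↑((Finset.range (κ+1)).filter (fun s => (2*r+1+2*k*s)*d ≤ 2*κ*k)) := by
        ext s
        have hiff : c + 2*Real.pi*(s:ℝ) ≤ 2 * Real.pi * ((κ:ℝ)/(d:ℝ)) ↔ ((2*r+1+2*k*s)*d : ℕ) ≤ (2*κ*k : ℕ) := by
          rw [← mul_le_mul_iff_of_pos_right (by positivity : (0:ℝ) < (k:ℝ)*(d:ℝ))]
          have e1 : (c + 2*Real.pi*(s:ℝ)) * ((k:ℝ)*(d:ℝ))
              = Real.pi * (((2*r+1+2*k*s)*d : ℕ) : ℝ) := by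
            rw [hc]; push_cast; field_simp
          have e2 : 2 * Real.pi * ((κ:ℝ)/(d:ℝ)) * ((k:ℝ)*(d:ℝ)) = Real.pi * (((2*κ*k : ℕ)):ℝ) := by
            push_cast; field_simp
          rw [e1, e2, mul_le_mul_iff_of_pos_left hπ, Nat.cast_le]
        simp only [Set.mem_setOf_eq, Finset.coe_filter, Finset.mem_range, Set.mem_setOf_eq]
        rw [hiff]
        constructor
        · intro h
          refine ⟨?_, h⟩
          by_contra hcon
          push_neg at hcon
          have h5 : 2*k*(κ+1) ≤ 2*k*s := Nat.mul_le_mul_left _ hcon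
          have h6 : 2*k*s ≤ (2*r+1+2*k*s)*d := by
            calc 2*k*s ≤ 2*r+1+2*k*s := by omega
            _ ≤ (2*r+1+2*k*s)*d := Nat.le_mul_of_pos_right _ hd
          have e3 : 2*k*(κ+1) = 2*κ*k + 2*k := by ring
          omega
        · exact fun h => h.2
      rw [hseteq, Set.ncard_coe_finset]
    have hsum : ((Multiset.range k).map
        (fun r => Nat.card {l : ℝ // 0 < l ∧ l ≤ 2 * Real.pi * ((κ:ℝ)/(d:ℝ)) ∧ Complex.exp ((l : ℂ) * Complex.I) = rootFn k r})).sum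
        = ∑ r ∈ Finset.range k, ((Finset.range (κ+1)).filter (fun s => (2*r+1+2*k*s)*d ≤ 2*κ*k)).card := by
      rw [Finset.sum]
      congr 1
      rw [Finset.range_val]
      apply Multiset.map_congr rfl
      intro r hr
      exact hroot r (Multiset.mem_range.mp hr)
    simp only [Function.comp_def]
    rw [hsum, sum_count κ d k hd hk]

lemma rootMult_zero (m n : ℕ) (hmn : n ≤ m) :
    rootMultiplicity 0 (X ^ m + X ^ n : ℝ[X]) = n := by
  have h1 : (X ^ m + X ^ n : ℝ[X]) = X ^ n * (X ^ (m - n) + 1) := by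
    rw [mul_add, mul_one, ← pow_add, Nat.add_sub_cancel' hmn]
  have hX1 : (X ^ (m - n) + 1 : ℝ[X]) ≠ 0 := by
    intro h
    have h2 := congrArg (fun p => Polynomial.eval 0 p) h
    simp only [Polynomial.eval_add, Polynomial.eval_pow, Polynomial.eval_X, Polynomial.eval_one,
      Polynomial.eval_zero] at h2
    rcases Nat.eq_zero_or_pos (m - n) with h0 | h0
    · rw [h0, pow_zero] at h2; norm_num at h2
    · rw [zero_pow (by omega)] at h2; norm_num at h2
  have hXn : (X ^ n : ℝ[X]) ≠ 0 := pow_ne_zero _ Polynomial.X_ne_zero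
  rw [h1, Polynomial.rootMultiplicity_mul (mul_ne_zero hXn hX1)]
  have h2 : rootMultiplicity 0 (X ^ n : ℝ[X]) = n := by
    have : (X ^ n : ℝ[X]) = (X - C 0) ^ n := by rw [map_zero, sub_zero]
    rw [this, Polynomial.rootMultiplicity_X_sub_C_pow]
  have h3 : rootMultiplicity 0 (X ^ (m - n) + 1 : ℝ[X]) = 0 := by
    apply Polynomial.rootMultiplicity_eq_zero
    intro h
    rw [Polynomial.IsRoot, Polynomial.eval_add, Polynomial.eval_pow, Polynomial.eval_one, Polynomial.eval_X] at h
    rcases Nat.eq_zero_or_pos (m - n) with h0 | h0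
    · rw [h0, pow_zero] at h; linarith
    · rw [zero_pow (by omega)] at h; linarith
  rw [h2, h3]
  omega

lemma rootMult_one (m n : ℕ) : rootMultiplicity 1 (X ^ m + X ^ n : ℝ[X]) = 0 := by
  apply Polynomial.rootMultiplicity_eq_zero
  intro h
  rw [Polynomial.IsRoot, Polynomial.eval_add, Polynomial.eval_pow, Polynomial.eval_pow,
    Polynomial.eval_X, one_pow, one_pow] at h
  linarith

lemma natDeg_eq (m n : ℕ) (hmn : n ≤ m) : (X ^ m + X ^ n : ℝ[X]).natDegree = m := by
  rcases eq_or_lt_of_le hmn with h | h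
  · subst h
    have h1 : (X ^ n + X ^ n : ℝ[X]) = C 2 * X ^ n := by
      rw [show (C 2 : ℝ[X]) = 2 from map_ofNat C 2]; ring
    rw [h1, Polynomial.natDegree_C_mul (two_ne_zero), Polynomial.natDegree_X_pow]
  · rw [Polynomial.natDegree_add_eq_left_of_degree_lt, Polynomial.natDegree_X_pow]
    rw [Polynomial.degree_X_pow, Polynomial.degree_X_pow]
    exact_mod_cast h

lemma piFn_eval (κ d m n : ℕ) (hd : 1 ≤ d) (hκ : 1 ≤ κ) (hmn : n ≤ m) :
    piFn κ d (X ^ m + X ^ n) = ((m:ℚ) + (n:ℚ)) * κ / d + ((2*κ*(m-n)/d + 1)/2 : ℕ) := by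
  rw [piFn, rootMult_zero m n hmn, rootMult_one, natDeg_eq m n hmn]
  have : (X ^ m + X ^ n : ℝ[X]) = X ^ (n + (m - n)) + X ^ n := by
    rw [Nat.add_sub_cancel' hmn]
  rw [this, argCount_eq κ d n (m-n) hd hκ]
  push_cast
  ring

lemma div1 (d A M : ℕ) (hd : 1 ≤ d) (hA : 1 ≤ A) (hM : M < 2*d) :
    (((2*A-1)*d + M)/d + 1)/2 = A := by
  obtain ⟨A', rfl⟩ : ∃ A', A = A' + 1 := ⟨A-1, by omega⟩
  rw [show 2*(A'+1)-1 = 2*A'+1 from by omega,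
    show (2*A'+1)*d + M = M + (2*A'+1)*d from by ring,
    Nat.add_mul_div_right _ _ hd]
  have h2 : M / d < 2 := Nat.div_lt_of_lt_mul (by omega)
  rcases Nat.le_one_iff_eq_zero_or_eq_one.mp (Nat.lt_succ_iff.mp h2) with h | h <;> rw [h] <;> omega

lemma div2 (d C M q : ℕ) (hd : 1 ≤ d) (hM : M < 2*d) (hq : q + M = (2*C+1)*d) :
    (q/d + 1)/2 = C + (if M = 0 then 1 else 0) := by
  rcases Nat.eq_zero_or_pos M with rfl | hM0
  · rw [if_pos rfl]
    have hqe : q = (2*C+1)*d := by omega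
    rw [hqe, Nat.mul_div_cancel _ (by omega)]
    omega
  · rw [if_neg (by omega)]
    rcases Nat.eq_zero_or_pos C with rfl | hC
    · have hq' : q + M = d := by omega
      rw [Nat.div_eq_of_lt (show q < d by omega)]
    · obtain ⟨C', rfl⟩ : ∃ C', C = C' + 1 := ⟨C-1, by omega⟩
      have h1 : (2*(C'+1)+1)*d = 2*(C'*d) + 3*d := by ring
      have h2 : (2*C'+1)*d = 2*(C'*d) + d := by ring
      have hrep : q = (2*d - M) + (2*C'+1)*d := by omega
      rw [hrep, Nat.add_mul_div_right _ _ hd]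
      have h3 : (2*d - M) / d < 2 := Nat.div_lt_of_lt_mul (by omega)
      rcases Nat.le_one_iff_eq_zero_or_eq_one.mp (Nat.lt_succ_iff.mp h3) with h | h <;> rw [h] <;> omega

lemma div3 (d κ x : ℕ) (hd : 1 ≤ d) : ((x + 2*κ*d)/d + 1)/2 = (x/d + 1)/2 + κ := by
  rw [show x + 2*κ*d = x + (2*κ)*d from by ring, Nat.add_mul_div_right _ _ hd]
  rcases Nat.even_or_odd (x/d) with ⟨y, hy⟩ | ⟨y, hy⟩ <;> rw [hy] <;> omega

/-- Proposition 8.2, second equation: writing `κ(j−i) = ad + b − d/2` with `a` an integer and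
`b` a half-integer satisfying `0 ≤ b < d`, the difference
`π_{κ/d}(q^{i+d} + q^j) − π_{κ/d}(q^i + q^j)` equals `2κ` if `2κ(i−j) > −d`, equals
`2(κ − a) + δ_{0,b}` if `d − 2κd ≤ 2κ(i−j) ≤ −d`, and equals `0` if `2κ(i−j) < d − 2κd`. -/
theorem piFn_shift_add (κ d : ℕ) (hd : 2 ≤ d) (hκ : 1 ≤ κ) (hcop : Nat.Coprime κ d)
    (i j : ℕ) (a : ℤ) (b : ℚ) (hbhalf : ∃ m : ℤ, 2 * b = (m : ℚ))
    (hab : (κ : ℚ) * ((j : ℚ) - (i : ℚ)) = (a : ℚ) * (d : ℚ) + b - (d : ℚ) / 2)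
    (hb0 : 0 ≤ b) (hbd : b < (d : ℚ)) :
    (-(d : ℤ) < 2 * (κ : ℤ) * ((i : ℤ) - (j : ℤ)) →
      piFn κ d (X ^ (i + d) + X ^ j) - piFn κ d (X ^ i + X ^ j) = 2 * (κ : ℚ)) ∧
    ((d : ℤ) - 2 * (κ : ℤ) * (d : ℤ) ≤ 2 * (κ : ℤ) * ((i : ℤ) - (j : ℤ)) →
      2 * (κ : ℤ) * ((i : ℤ) - (j : ℤ)) ≤ -(d : ℤ) →
      piFn κ d (X ^ (i + d) + X ^ j) - piFn κ d (X ^ i + X ^ j) =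
        if b = 0 then 2 * ((κ : ℚ) - (a : ℚ)) + 1 else 2 * ((κ : ℚ) - (a : ℚ))) ∧
    (2 * (κ : ℤ) * ((i : ℤ) - (j : ℤ)) < (d : ℤ) - 2 * (κ : ℤ) * (d : ℤ) →
      piFn κ d (X ^ (i + d) + X ^ j) - piFn κ d (X ^ i + X ^ j) = 0) := by
  have hd1 : 1 ≤ d := by omega
  have hdQ : (d:ℚ) ≠ 0 := Nat.cast_ne_zero.mpr (by omega)
  have hdZ : (2:ℤ) ≤ d := by exact_mod_cast hd
  have hκZ : (1:ℤ) ≤ κ := by exact_mod_cast hκ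
  obtain ⟨M, hM2⟩ := hbhalf
  have hM0 : 0 ≤ M := by
    have : (0:ℚ) ≤ (M:ℚ) := by rw [← hM2]; linarith
    exact_mod_cast this
  have hMd : M < 2*(d:ℤ) := by
    have : (M:ℚ) < 2*(d:ℚ) := by rw [← hM2]; linarith
    exact_mod_cast this
  have hZ : 2*(κ:ℤ)*((j:ℤ)-(i:ℤ)) = 2*a*d + M - d := by
    have hq : ((2*(κ:ℤ)*((j:ℤ)-(i:ℤ)) : ℤ) : ℚ) = ((2*a*d + M - d : ℤ) : ℚ) := by
      push_cast
      rw [← hM2]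
      linarith [hab]
    exact_mod_cast hq
  refine ⟨?_, ?_, ?_⟩
  -- Case 1
  · intro h
    rcases Nat.le_total j i with hji | hij
    · rw [piFn_eval κ d (i+d) j hd1 hκ (by omega), piFn_eval κ d i j hd1 hκ hji]
      rw [show (i+d) - j = (i - j) + d from by omega,
        show 2*κ*((i-j)+d) = 2*κ*(i-j) + 2*κ*d from by ring,
        div3 d κ (2*κ*(i-j)) hd1]
      push_cast
      field_simp
      ring
    · set e := j - i with he
      have heZ : (e:ℤ) = (j:ℤ) - i := by
        rw [he]; push_cast [Nat.cast_sub hij]; ring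
      have hprod : 2*(κ:ℤ)*((i:ℤ)-(j:ℤ)) = -(2*(κ:ℤ)*(e:ℤ)) := by
        rw [heZ]; ring
      have heN : 2*κ*e < d := by
        have : (2*(κ:ℤ)*(e:ℤ)) < d := by rw [hprod] at h; linarith
        exact_mod_cast this
      have hed : e < d := by
        have h1 : 2*1*e ≤ 2*κ*e := Nat.mul_le_mul_right _ (by omega)
        omega
      rw [piFn_eval κ d (i+d) j hd1 hκ (by omega),
        show (X ^ i + X ^ j : ℝ[X]) = X ^ j + X ^ i from add_comm _ _,
        piFn_eval κ d j i hd1 hκ hij]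
      rw [show j - i = e from rfl, show (i+d) - j = d - e from by omega]
      have hN0 : (2*κ*e/d + 1)/2 = 0 := by
        rw [Nat.div_eq_of_lt heN]
      have hsum : 2*κ*(d-e) + 2*κ*e = 2*κ*d := by
        rw [← Nat.mul_add, Nat.sub_add_cancel (by omega)]
      have hq1 : 2*κ*(d-e) + (d + 2*κ*e) = (2*κ+1)*d := by
        have : (2*κ+1)*d = 2*κ*d + d := by ring
        omega
      have hN1 : (2*κ*(d-e)/d + 1)/2 = κ := by
        rw [div2 d κ (d + 2*κ*e) (2*κ*(d-e)) hd1 (by omega) hq1, if_neg (by omega)]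
        omega
      rw [hN0, hN1]
      push_cast
      field_simp
      ring
  -- Case 2
  · intro h1 h2
    have hij : i < j := by
      by_contra hc
      push_neg at hc
      have h3 : (0:ℤ) ≤ (i:ℤ) - j := by
        have : (j:ℤ) ≤ i := by exact_mod_cast hc
        linarith
      have h4 : (0:ℤ) ≤ 2*(κ:ℤ)*((i:ℤ)-j) := mul_nonneg (by positivity) h3
      linarith
    set e := j - i with he
    have heZ : (e:ℤ) = (j:ℤ) - i := by
      rw [he]; push_cast [Nat.cast_sub (le_of_lt hij)]; ring
    have hq0Z : 2*(κ:ℤ)*(e:ℤ) = 2*a*d + M - d := by rw [heZ]; exact hZ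
    have hlow : (d:ℤ) ≤ 2*(κ:ℤ)*(e:ℤ) := by
      have : 2*(κ:ℤ)*((i:ℤ)-j) = -(2*(κ:ℤ)*(e:ℤ)) := by rw [heZ]; ring
      rw [this] at h2; linarith
    have hhigh : 2*(κ:ℤ)*(e:ℤ) ≤ 2*(κ:ℤ)*d - d := by
      have : 2*(κ:ℤ)*((i:ℤ)-j) = -(2*(κ:ℤ)*(e:ℤ)) := by rw [heZ]; ring
      rw [this] at h1; linarith
    have ha1 : 1 ≤ a := by
      by_contra hc
      push_neg at hc
      have h5 : 2*a*(d:ℤ) ≤ 0 :=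
        mul_nonpos_of_nonpos_of_nonneg (by omega) (by positivity)
      linarith
    have haκ : a ≤ κ := by
      by_contra hc
      push_neg at hc
      have h5 : 2*((κ:ℤ)+1)*d ≤ 2*a*d :=
        mul_le_mul_of_nonneg_right (by omega) (by positivity)
      linarith
    set An := a.toNat with hAn
    set Mn := M.toNat with hMn
    have hAnZ : (An:ℤ) = a := Int.toNat_of_nonneg (by omega)
    have hMnZ : (Mn:ℤ) = M := Int.toNat_of_nonneg hM0
    have hAn1 : 1 ≤ An := by omega
    have hAnκ : An ≤ κ := by
      have : (An:ℤ) ≤ κ := by rw [hAnZ]; exact_mod_cast haκ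
      exact_mod_cast this
    have hMn2d : Mn < 2*d := by
      have : (Mn:ℤ) < 2*d := by rw [hMnZ]; exact hMd
      exact_mod_cast this
    have hed : e < d := by
      by_contra hc
      push_neg at hc
      have h5 : 2*(κ:ℤ)*d ≤ 2*(κ:ℤ)*e := by
        have : (d:ℤ) ≤ e := by exact_mod_cast hc
        exact mul_le_mul_of_nonneg_left this (by positivity)
      linarith
    have hq0 : 2*κ*e = (2*An-1)*d + Mn := by
      have hc : ((2*κ*e : ℕ) : ℤ) = (((2*An-1)*d + Mn : ℕ) : ℤ) := by
        push_cast [Nat.cast_sub (show 1 ≤ 2*An by omega)]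
        rw [hAnZ, hMnZ]
        linarith [hq0Z]
      exact_mod_cast hc
    have hq1 : 2*κ*(d-e) + Mn = (2*(κ-An)+1)*d := by
      have hc : ((2*κ*(d-e) + Mn : ℕ) : ℤ) = (((2*(κ-An)+1)*d : ℕ) : ℤ) := by
        push_cast [Nat.cast_sub (le_of_lt hed), Nat.cast_sub hAnκ]
        rw [hAnZ, hMnZ]
        linarith [hq0Z]
      exact_mod_cast hc
    rw [piFn_eval κ d (i+d) j hd1 hκ (by omega),
      show (X ^ i + X ^ j : ℝ[X]) = X ^ j + X ^ i from add_comm _ _,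
      piFn_eval κ d j i hd1 hκ (le_of_lt hij)]
    rw [show j - i = e from rfl, show (i+d) - j = d - e from by omega]
    rw [hq0, div1 d An Mn hd1 hAn1 hMn2d,
      div2 d (κ-An) Mn (2*κ*(d-e)) hd1 hMn2d hq1]
    have hbiff : (b = 0) ↔ (Mn = 0) := by
      constructor
      · intro hb
        have : (M:ℚ) = 0 := by rw [← hM2, hb]; ring
        have hMz : M = 0 := by exact_mod_cast this
        omega
      · intro hm
        have hMz : M = 0 := by omega
        have : 2*b = 0 := by rw [hM2, hMz]; norm_num
        linarith
    have haQ : (a:ℚ) = (An:ℚ) := by exact_mod_cast hAnZ.symm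
    by_cases hb : b = 0
    · rw [if_pos hb, if_pos (hbiff.mp hb)]
      rw [haQ]
      push_cast [Nat.cast_sub hAnκ]
      field_simp
      ring
    · rw [if_neg hb, if_neg (fun hmn => hb (hbiff.mpr hmn))]
      rw [haQ]
      push_cast [Nat.cast_sub hAnκ]
      field_simp
      ring
  -- Case 3
  · intro h
    have hij : i < j := by
      by_contra hc
      push_neg at hc
      have h3 : (0:ℤ) ≤ (i:ℤ) - j := by
        have : (j:ℤ) ≤ i := by exact_mod_cast hc
        linarith
      have h4 : (0:ℤ) ≤ 2*(κ:ℤ)*((i:ℤ)-j) := mul_nonneg (by positivity) h3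
      have h5 : (d:ℤ) - 2*(κ:ℤ)*d ≤ 0 := by nlinarith
      linarith
    set e := j - i with he
    have heZ : (e:ℤ) = (j:ℤ) - i := by
      rw [he]; push_cast [Nat.cast_sub (le_of_lt hij)]; ring
    have hlow : 2*(κ:ℤ)*d - d < 2*(κ:ℤ)*(e:ℤ) := by
      have : 2*(κ:ℤ)*((i:ℤ)-j) = -(2*(κ:ℤ)*(e:ℤ)) := by rw [heZ]; ring
      rw [this] at h; linarith
    have hlowN : 2*κ*d < 2*κ*e + d := by
      have : (2*(κ:ℤ)*(d:ℤ)) < 2*(κ:ℤ)*e + d := by linarith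
      exact_mod_cast this
    rcases Nat.le_total e d with hed | hde
    · -- e ≤ d
      have hsum : 2*κ*(d-e) + 2*κ*e = 2*κ*d := by
        rw [← Nat.mul_add, Nat.sub_add_cancel hed]
      have hupper : 2*κ*e ≤ 2*κ*d := Nat.mul_le_mul_left _ hed
      have hcast : ((2*κ*(d-e) : ℕ) : ℤ) = 2*(κ:ℤ)*d - 2*(κ:ℤ)*e := by
        push_cast [Nat.cast_sub hed]
        ring
      have hlt : 2*κ*(d-e) < d := by
        have : ((2*κ*(d-e) : ℕ) : ℤ) < d := by rw [hcast]; linarith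
        exact_mod_cast this
      have hN1 : (2*κ*(d-e)/d + 1)/2 = 0 := by
        rw [Nat.div_eq_of_lt hlt]
      have hq0rep : 2*κ*e = (2*κ-1)*d + (2*κ*e + d - 2*κ*d) := by
        have e4 : (2*κ-1+1)*d = (2*κ-1)*d + 1*d := by ring
        have e5 : 2*κ-1+1 = 2*κ := by omega
        rw [e5] at e4
        omega
      have hN0 : (2*κ*e/d + 1)/2 = κ := by
        rw [hq0rep, div1 d κ _ hd1 hκ (by omega)]
      rw [piFn_eval κ d (i+d) j hd1 hκ (by omega),
        show (X ^ i + X ^ j : ℝ[X]) = X ^ j + X ^ i from add_comm _ _,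
        piFn_eval κ d j i hd1 hκ (le_of_lt hij)]
      rw [show j - i = e from rfl, show (i+d) - j = d - e from by omega]
      rw [hN0, hN1]
      push_cast
      field_simp
      ring
    · -- d ≤ e
      rw [show (X ^ (i+d) + X ^ j : ℝ[X]) = X ^ j + X ^ (i+d) from add_comm _ _,
        piFn_eval κ d j (i+d) hd1 hκ (by omega),
        show (X ^ i + X ^ j : ℝ[X]) = X ^ j + X ^ i from add_comm _ _,
        piFn_eval κ d j i hd1 hκ (le_of_lt hij)]
      rw [show j - i = e from rfl, show j - (i+d) = e - d from by omega]
      rw [show 2*κ*e = 2*κ*(e-d) + 2*κ*d from by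
        rw [← Nat.mul_add, Nat.sub_add_cancel hde],
        div3 d κ (2*κ*(e-d)) hd1]
      push_cast
      field_simp
      ring
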